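/- For every θ > 0 and every n ≥ 1, the internal path length I_n^{(θ)} of a Hoppe tree with n nodes and parameter θ has expectation E[I_n^{(θ)}] = (θ + n − 1) · Σ_{i=1}^{n−1} 1/(θ + i). -/

import Mathlib

open MeasureTheory ProbabilityTheory Real Filter Topology

noncomputable section

/-- Depth of node `i` in the Hoppe tree grown from the parent choices `U`:
`U k ω` is the parent of node `k + 2` (a node in `{1, …, k + 1}`, almost surely);
node `1` is the root. The `min` clipping is irrelevant almost surely. -/
def hoppeDepth {Ω : Type*} (U : ℕ → Ω → ℕ) (ω : Ω) : ℕ → ℕ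
  | 0 => 0
  | 1 => 0
  | n + 2 => hoppeDepth U ω (min (U n ω) (n + 1)) + 1
  decreasing_by omega

/-- The parent choices of a Hoppe tree with parameter `θ`: `U k` is the (random) parent
of node `k + 2`, the choices being independent, node `k + 2` choosing its parent among
nodes `1, …, k + 1`, namely the root `1` with probability `θ / (θ + k)` and each other
node with probability `1 / (θ + k)`. -/
structure IsHoppeParents {Ω : Type*} [MeasurableSpace Ω] (θ : ℝ) (μ : Measure Ω)
    (U : ℕ → Ω → ℕ) : Prop where
  meas : ∀ k, Measurable (U k)
  indep : iIndepFun U μ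
  root : ∀ k : ℕ, μ {ω | U k ω = 1} = ENNReal.ofReal (θ / (θ + k))
  nonroot : ∀ k j : ℕ, 2 ≤ j → j ≤ k + 1 → μ {ω | U k ω = j} = ENNReal.ofReal (1 / (θ + k))
  range : ∀ k : ℕ, μ {ω | 1 ≤ U k ω ∧ U k ω ≤ k + 1} = 1

/-- Height of the Hoppe tree with `n` nodes: maximal depth over nodes `1, …, n`. -/
def hoppeHeight {Ω : Type*} (U : ℕ → Ω → ℕ) (ω : Ω) (n : ℕ) : ℕ :=
  (Finset.Icc 1 n).sup (fun i => hoppeDepth U ω i)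

/-- Internal path length of the Hoppe tree with `n` nodes: sum of the depths of
nodes `1, …, n`. -/
def hoppePathLength {Ω : Type*} (U : ℕ → Ω → ℕ) (ω : Ω) (n : ℕ) : ℕ :=
  ∑ i ∈ Finset.Icc 1 n, hoppeDepth U ω i

/-- Number of leaves of the Hoppe tree with `n` nodes: nodes `j ∈ {1, …, n}` that are
the parent of no node `k ∈ {2, …, n}`. -/
def hoppeLeafCount {Ω : Type*} (U : ℕ → Ω → ℕ) (ω : Ω) (n : ℕ) : ℕ :=
  (@Finset.filter _ (fun j => ∀ k ∈ Finset.Icc 2 n, U (k - 2) ω ≠ j) (fun _ => by infer_instance)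
    (Finset.Icc 1 n)).card

def depthAux (u : ℕ → ℕ) : ℕ → ℕ
  | 0 => 0
  | 1 => 0
  | n + 2 => depthAux u (min (u n) (n + 1)) + 1
  decreasing_by omega

lemma hoppeDepth_eq_depthAux {Ω : Type*} (U : ℕ → Ω → ℕ) (ω : Ω) (n : ℕ) :
    hoppeDepth U ω n = depthAux (fun i => U i ω) n := by
  induction n using Nat.strong_induction_on with
  | _ n ih =>
    match n with
    | 0 => simp [hoppeDepth, depthAux]
    | 1 => simp [hoppeDepth, depthAux]
    | n + 2 =>
      rw [hoppeDepth, depthAux]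
      rw [ih _ (by omega)]

lemma depthAux_congr {u v : ℕ → ℕ} (n : ℕ) (h : ∀ i, i + 2 ≤ n → u i = v i) :
    depthAux u n = depthAux v n := by
  induction n using Nat.strong_induction_on with
  | _ n ih =>
    match n with
    | 0 => simp [hoppeDepth, depthAux]
    | 1 => simp [hoppeDepth, depthAux]
    | n + 2 =>
      rw [depthAux, depthAux, h n le_rfl, ih _ (by omega) (fun i hi => h i (by omega))]

lemma depthAux_le (u : ℕ → ℕ) (n : ℕ) : depthAux u n ≤ n := by
  induction n using Nat.strong_induction_on with
  | _ n ih =>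
    match n with
    | 0 => simp [depthAux]
    | 1 => simp [depthAux]
    | n + 2 =>
      rw [depthAux]
      have := ih (min (u n) (n + 1)) (by omega)
      omega

lemma measurable_hoppeDepth {Ω : Type*} [MeasurableSpace Ω] (U : ℕ → Ω → ℕ)
    (hm : ∀ k, Measurable (U k)) (n : ℕ) :
    Measurable (fun ω => hoppeDepth U ω n) := by
  have heq : (fun ω => hoppeDepth U ω n)
      = (fun v : Fin n → ℕ => depthAux (fun i => if h : i < n then v ⟨i, h⟩ else 0) n)
        ∘ (fun ω (i : Fin n) => U i ω) := by
    funext ω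
    simp only [Function.comp_apply]
    rw [hoppeDepth_eq_depthAux]
    exact depthAux_congr n (fun i hi => by rw [dif_pos (by omega)])
  rw [heq]
  exact (measurable_of_countable _).comp (measurable_pi_lambda _ fun i => hm i)

section Main
variable {Ω : Type*} [MeasurableSpace Ω] {θ : ℝ} {μ : Measure Ω} {U : ℕ → Ω → ℕ}

lemma indepFun_depth (hU : IsHoppeParents θ μ U) (k j : ℕ) (hj : j ≤ k + 1) :
    IndepFun (U k) (fun ω => hoppeDepth U ω j) μ := by
  have h := hU.indep.indepFun_finset {k} (Finset.range k)
    (by simp [Finset.disjoint_left]) hU.meas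
  have h2 := h.comp (φ := fun v : ({k} : Finset ℕ) → ℕ => v ⟨k, Finset.mem_singleton_self k⟩)
      (ψ := fun v : {x // x ∈ Finset.range k} → ℕ =>
        depthAux (fun i => if h : i ∈ Finset.range k then v ⟨i, h⟩ else 0) j)
      (measurable_of_countable _) (measurable_of_countable _)
  convert h2 using 1
  all_goals funext ω
  simp only [Function.comp_apply]
  rw [hoppeDepth_eq_depthAux]
  exact depthAux_congr j (fun i hi => by rw [dif_pos (by simp; omega)])

lemma integrable_depth [IsProbabilityMeasure μ] (hU : IsHoppeParents θ μ U) (j : ℕ) :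
    Integrable (fun ω => (hoppeDepth U ω j : ℝ)) μ := by
  refine Integrable.mono' (integrable_const (j : ℝ))
    (((measurable_from_nat (f := fun m : ℕ => (m : ℝ))).comp (measurable_hoppeDepth U hU.meas j)).aestronglyMeasurable) ?_
  refine Filter.Eventually.of_forall (fun ω => ?_)
  rw [Real.norm_natCast]
  exact_mod_cast (hoppeDepth_eq_depthAux U ω j ▸ depthAux_le (fun i => U i ω) j)


lemma integral_depth_succ [IsProbabilityMeasure μ] (hθ : 0 < θ) (hU : IsHoppeParents θ μ U)
    (k : ℕ) :
    ∫ ω, (hoppeDepth U ω (k + 2) : ℝ) ∂μ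
      = 1 + (∑ j ∈ Finset.Icc 2 (k + 1), ∫ ω, (hoppeDepth U ω j : ℝ) ∂μ) / (θ + k) := by
  have hθk : (0 : ℝ) < θ + k := by positivity
  have hsmeas : ∀ j : ℕ, MeasurableSet {ω | U k ω = j} := fun j =>
    hU.meas k (measurableSet_singleton j)
  have hrange : ∀ᵐ ω ∂μ, 1 ≤ U k ω ∧ U k ω ≤ k + 1 := by
    rw [ae_iff]
    have hms : MeasurableSet {ω | 1 ≤ U k ω ∧ U k ω ≤ k + 1} :=
      hU.meas k ((Set.to_countable {m : ℕ | 1 ≤ m ∧ m ≤ k + 1}).measurableSet)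
    have h := (prob_compl_eq_zero_iff hms).mpr (hU.range k)
    convert h using 2
    ext ω; simp
  have hkey : ∀ᵐ ω ∂μ, (hoppeDepth U ω (k + 2) : ℝ)
      = 1 + ∑ j ∈ Finset.Icc 1 (k + 1),
          (if U k ω = j then (1 : ℝ) else 0) * (hoppeDepth U ω j : ℝ) := by
    filter_upwards [hrange] with ω hω
    obtain ⟨h1, h2⟩ := hω
    rw [hoppeDepth, min_eq_left h2]
    rw [Finset.sum_eq_single_of_mem (U k ω) (Finset.mem_Icc.mpr ⟨h1, h2⟩)
      (fun b _ hb => by rw [if_neg (fun h => hb h.symm), zero_mul])]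
    rw [if_pos rfl, one_mul]
    push_cast; ring
  have hint : ∀ j ∈ Finset.Icc 1 (k + 1), Integrable
      (fun ω => (if U k ω = j then (1 : ℝ) else 0) * (hoppeDepth U ω j : ℝ)) μ := by
    intro j _
    exact (integrable_depth hU j).bdd_mul
      (((measurable_from_nat (f := fun m => if m = j then (1 : ℝ) else 0)).comp (hU.meas k)).aestronglyMeasurable)
      (c := 1) (Filter.Eventually.of_forall fun ω => by by_cases h : U k ω = j <;> simp [h])
  rw [integral_congr_ae hkey,
    integral_add (integrable_const 1) (integrable_finset_sum _ hint), integral_const,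
    integral_finset_sum _ hint]
  simp only [measureReal_def, measure_univ, ENNReal.toReal_one, smul_eq_mul, mul_one, one_mul]
  have hterm : ∀ j ∈ Finset.Icc 1 (k + 1),
      ∫ ω, (if U k ω = j then (1 : ℝ) else 0) * (hoppeDepth U ω j : ℝ) ∂μ
        = (μ {ω | U k ω = j}).toReal * ∫ ω, (hoppeDepth U ω j : ℝ) ∂μ := by
    intro j hj
    have hind : IndepFun (fun ω => if U k ω = j then (1 : ℝ) else 0)
        (fun ω => (hoppeDepth U ω j : ℝ)) μ :=
      (indepFun_depth hU k j (Finset.mem_Icc.mp hj).2).comp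
        (φ := fun m => if m = j then (1 : ℝ) else 0) (ψ := fun m : ℕ => (m : ℝ))
        measurable_from_nat measurable_from_nat
    refine (hind.integral_mul_eq_mul_integral (((measurable_from_nat (f := fun m => if m = j then (1 : ℝ) else 0)).comp (hU.meas k)).aestronglyMeasurable)
      (((measurable_from_nat (f := fun m : ℕ => (m : ℝ))).comp (measurable_hoppeDepth U hU.meas j)).aestronglyMeasurable)).trans ?_
    congr 1
    have hi : (fun ω => if U k ω = j then (1 : ℝ) else 0)
        = Set.indicator {ω | U k ω = j} (fun _ => (1 : ℝ)) := by
      funext ω; rw [Set.indicator_apply]; rfl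
    rw [hi, integral_indicator_const _ (hsmeas j)]
    simp [measureReal_def]
  rw [Finset.sum_congr rfl hterm]
  have hins : Finset.Icc 1 (k + 1) = insert 1 (Finset.Icc 2 (k + 1)) := by
    ext m; simp only [Finset.mem_Icc, Finset.mem_insert]; omega
  have h1 : ∫ ω, (hoppeDepth U ω 1 : ℝ) ∂μ = 0 := by simp [hoppeDepth]
  rw [hins, Finset.sum_insert (by simp), h1, mul_zero, zero_add]
  congr 1
  rw [Finset.sum_congr rfl (fun j hj => by
    rw [hU.nonroot k j (Finset.mem_Icc.mp hj).1 (Finset.mem_Icc.mp hj).2,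
      ENNReal.toReal_ofReal (by positivity), one_div, inv_mul_eq_div]), ← Finset.sum_div]

end Main


/-- Expected internal path length of a Hoppe tree:
`E[I_n] = (θ + n - 1) ∑_{i=1}^{n-1} 1/(θ + i)`. -/
theorem hoppe_path_length_expectation
    {Ω : Type*} [MeasurableSpace Ω]
    (θ : ℝ) (hθ : 0 < θ)
    (μ : Measure Ω) [IsProbabilityMeasure μ] (U : ℕ → Ω → ℕ) (hU : IsHoppeParents θ μ U) :
    ∀ n : ℕ, 1 ≤ n →
      ∫ ω, (hoppePathLength U ω n : ℝ) ∂μ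
        = (θ + (n : ℝ) - 1) * ∑ i ∈ Finset.Icc 1 (n - 1), 1 / (θ + i) := by
  have hInt : ∀ m : ℕ, ∫ ω, (hoppePathLength U ω m : ℝ) ∂μ
      = ∑ i ∈ Finset.Icc 1 m, ∫ ω, (hoppeDepth U ω i : ℝ) ∂μ := by
    intro m
    rw [← integral_finset_sum _ (fun i _ => integrable_depth hU i)]
    refine integral_congr_ae (Filter.Eventually.of_forall fun ω => ?_)
    simp only [hoppePathLength]
    push_cast
    rfl
  have hE1 : ∫ ω, (hoppeDepth U ω 1 : ℝ) ∂μ = 0 := by simp [hoppeDepth]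
  intro n hn
  induction n, hn using Nat.le_induction with
  | base =>
    rw [hInt 1, Finset.Icc_self, Finset.sum_singleton, hE1]
    simp
  | succ n hn ih =>
    obtain ⟨m, rfl⟩ : ∃ m, n = m + 1 := ⟨n - 1, by omega⟩
    rw [hInt] at ih ⊢
    have htop : Finset.Icc 1 (m + 1 + 1) = insert (m + 1 + 1) (Finset.Icc 1 (m + 1)) := by
      ext x; simp only [Finset.mem_Icc, Finset.mem_insert]; omega
    rw [htop, Finset.sum_insert (by simp)]
    rw [show m + 1 + 1 = m + 2 from rfl, integral_depth_succ hθ hU m]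
    have hins : Finset.Icc 1 (m + 1) = insert 1 (Finset.Icc 2 (m + 1)) := by
      ext x; simp only [Finset.mem_Icc, Finset.mem_insert]; omega
    have hsum2 : ∑ j ∈ Finset.Icc 2 (m + 1), ∫ ω, (hoppeDepth U ω j : ℝ) ∂μ
        = ∑ j ∈ Finset.Icc 1 (m + 1), ∫ ω, (hoppeDepth U ω j : ℝ) ∂μ := by
      rw [hins, Finset.sum_insert (by simp), hE1, zero_add]
    rw [hsum2, ih]
    simp only [Nat.add_sub_cancel, show m + 2 - 1 = m + 1 from rfl]
    have h1 : Finset.Icc 1 (m + 1) = insert (m + 1) (Finset.Icc 1 m) := by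
      ext x; simp only [Finset.mem_Icc, Finset.mem_insert]; omega
    rw [h1, Finset.sum_insert (by simp)]
    have hm0 : θ + (m : ℝ) ≠ 0 := by positivity
    have hm1 : θ + ((m : ℝ) + 1) ≠ 0 := by positivity
    push_cast
    field_simp
    ring

end
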